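/- Suppose A(r) and V(r) are functions with A(r) = 2πr^2(1 + Θ(r) + O(r^{-2τ})) where Θ(r) = O(r^{-τ}), τ > 1/2, and V(r) = (1/2) r A(r) - (1/3)πr^3 + πm r^2 + o(r^2). Then (2/A(r))·(V(r) - √2 A(r)^{3/2}/(6√π)) → m as r → ∞. -/

import Mathlib

open Filter Asymptotics

/-- Algebraic bound: the function `1 - 1/(3s²) - (2/3)s` equals `-(s-1)²(2s+1)/(3s²)`
and is bounded by `(s²-1)²` for `s² ≥ 1/2`, `s ≥ 0`. -/
lemma isoperimetric_aux_bound (s : ℝ) (hs0 : 0 ≤ s) (hs : (1:ℝ)/2 ≤ s^2) :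
    |1 - 1/(3*s^2) - (2/3)*s| ≤ (s^2 - 1)^2 := by
  have hs7 : (7:ℝ)/10 ≤ s := by nlinarith
  have hspos : (0:ℝ) < s := by linarith
  have key : 1 - 1/(3*s^2) - (2/3)*s = -((s-1)^2*(2*s+1))/(3*s^2) := by
    field_simp; ring
  rw [key, abs_div, abs_neg, abs_of_nonneg (by positivity), abs_of_nonneg (by positivity),
    div_le_iff₀ (by positivity)]
  have h1 : (s^2-1)^2 = (s-1)^2*(s+1)^2 := by ring
  rw [h1]
  nlinarith [sq_nonneg (s-1), sq_nonneg (s+1), sq_nonneg s]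

/-- if `A(r) = 2πr²(1 + Θ(r) + O(r^{-2τ}))` with `Θ(r) = O(r^{-τ})`,
`τ > 1/2`, and `V(r) = (1/2) r A(r) - (1/3)πr³ + πm r² + o(r²)`, then the isoperimetric
mass expression `(2/A(r))(V(r) - √2 A(r)^{3/2}/(6√π))` tends to `m` as `r → ∞`. -/
theorem isoperimetric_mass_limit
    (A V Θ : ℝ → ℝ) (m τ : ℝ) (hτ : τ > 1 / 2)
    (hΘ : Θ =O[atTop] fun r => r ^ (-τ))
    (hA : (fun r => A r - 2 * Real.pi * r ^ 2 * (1 + Θ r))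
      =O[atTop] fun r => r ^ ((2 : ℝ) - 2 * τ))
    (hV : (fun r => V r - ((1 / 2) * r * A r - (1 / 3) * Real.pi * r ^ 3
        + Real.pi * m * r ^ 2))
      =o[atTop] fun r => r ^ 2) :
    Tendsto (fun r => (2 / A r) *
        (V r - Real.sqrt 2 * (A r) ^ ((3 : ℝ) / 2) / (6 * Real.sqrt Real.pi)))
      atTop (nhds m) := by
  have hπ : (0:ℝ) < Real.pi := Real.pi_pos
  have hτ0 : (0:ℝ) < τ := by linarith
  set q : ℝ → ℝ := fun r => A r / (2 * Real.pi * r ^ 2) with hq_def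
  set W : ℝ → ℝ := fun r => (1 / 2) * r * A r - (1 / 3) * Real.pi * r ^ 3
      + Real.pi * m * r ^ 2 with hW_def
  -- the inverse area factor is O(r^{-2})
  have hOinv : (fun r : ℝ => 1 / (2 * Real.pi * r ^ 2)) =O[atTop]
      fun r : ℝ => r ^ (-2 : ℝ) := by
    rw [isBigO_iff]
    refine ⟨(2*Real.pi)⁻¹, ?_⟩
    filter_upwards [eventually_gt_atTop (0:ℝ)] with r hr
    have h1 : r ^ (-2:ℝ) = (r^2)⁻¹ := by
      rw [Real.rpow_neg hr.le, show ((2:ℝ)) = ((2:ℕ):ℝ) by norm_num, Real.rpow_natCast]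
    rw [h1, Real.norm_eq_abs, Real.norm_eq_abs, abs_of_nonneg (by positivity),
      abs_of_nonneg (by positivity)]
    rw [one_div, mul_inv, mul_comm]
  -- correction term is O(r^{-2τ})
  have h2 : (fun r => (A r - 2*Real.pi*r^2*(1+Θ r)) * (1 / (2*Real.pi*r^2))) =O[atTop]
      fun r => r ^ (-2*τ) := by
    refine (hA.mul hOinv).congr' (EventuallyEq.refl _ _) ?_
    filter_upwards [eventually_gt_atTop (0:ℝ)] with r hr
    rw [← Real.rpow_add hr]
    ring_nf
  have hexp : (fun r:ℝ => r ^ (-2*τ)) =O[atTop] fun r:ℝ => r ^ (-τ) := by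
    rw [isBigO_iff]
    refine ⟨1, ?_⟩
    filter_upwards [eventually_ge_atTop (1:ℝ)] with r hr
    have h0 : (0:ℝ) ≤ r := by linarith
    rw [one_mul, Real.norm_eq_abs, Real.norm_eq_abs,
      abs_of_nonneg (Real.rpow_nonneg h0 _), abs_of_nonneg (Real.rpow_nonneg h0 _)]
    exact Real.rpow_le_rpow_of_exponent_le hr (by linarith)
  have hε : (fun r => q r - 1) =O[atTop] fun r => r ^ (-τ) := by
    refine (hΘ.add (h2.trans hexp)).congr' ?_ (EventuallyEq.refl _ _)
    filter_upwards [eventually_gt_atTop (0:ℝ)] with r hr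
    have hr2 : (2*Real.pi*r^2) ≠ 0 := by positivity
    simp only [hq_def]
    field_simp
    ring
  have hq1 : Tendsto q atTop (nhds 1) := by
    have h0 : Tendsto (fun r => q r - 1) atTop (nhds 0) :=
      hε.trans_tendsto (tendsto_rpow_neg_atTop hτ0)
    have := h0.add_const 1
    simpa using this
  -- r * (q r - 1)^2 → 0
  have hB : Tendsto (fun r => r * (q r - 1)^2) atTop (nhds 0) := by
    have hO : (fun r => r * (q r - 1)^2) =O[atTop] fun r => r ^ (1 - 2*τ) := by
      have h2' := (isBigO_refl (fun r:ℝ => r) atTop).mul (hε.mul hε)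
      refine h2'.congr' ?_ ?_
      · filter_upwards with r; ring
      · filter_upwards [eventually_gt_atTop (0:ℝ)] with r hr
        rw [← Real.rpow_add hr]
        nth_rewrite 1 [← Real.rpow_one r]
        rw [← Real.rpow_add hr]
        ring_nf
    have hlim : Tendsto (fun r:ℝ => r ^ (1 - 2*τ)) atTop (nhds 0) := by
      have := tendsto_rpow_neg_atTop (show (0:ℝ) < 2*τ - 1 by linarith)
      simpa [show -(2*τ - 1) = 1 - 2*τ by ring] using this
    exact hO.trans_tendsto hlim
  have hqhalf : ∀ᶠ r in atTop, (1:ℝ)/2 ≤ q r :=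
    hq1.eventually (eventually_ge_nhds (by norm_num : (1:ℝ)/2 < 1))
  -- piece 1
  have h1lim : Tendsto (fun r => r * (1 - 1/(3*(Real.sqrt (q r))^2)
      - (2/3)*Real.sqrt (q r))) atTop (nhds 0) := by
    apply squeeze_zero_norm' ?_ hB
    filter_upwards [eventually_ge_atTop (1:ℝ), hqhalf] with r hr hq
    have hqpos : (0:ℝ) < q r := by linarith
    have hs2 : (Real.sqrt (q r))^2 = q r := Real.sq_sqrt hqpos.le
    have hb := isoperimetric_aux_bound (Real.sqrt (q r)) (Real.sqrt_nonneg _)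
      (by rw [hs2]; exact hq)
    rw [Real.norm_eq_abs, abs_mul, abs_of_nonneg (by linarith : (0:ℝ) ≤ r)]
    rw [hs2] at hb
    have hb' : |1 - 1/(3*(Real.sqrt (q r))^2) - (2/3)*Real.sqrt (q r)| ≤ (q r - 1)^2 := by
      rw [hs2]; exact hb
    exact mul_le_mul_of_nonneg_left hb' (by linarith)
  -- piece 2
  have h2lim : Tendsto (fun r => m / q r) atTop (nhds m) := by
    have := Tendsto.div (tendsto_const_nhds (x := m) (f := atTop)) hq1 one_ne_zero
    rw [div_one] at this; exact this
  -- piece 3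
  have hdiv : Tendsto (fun r => (V r - W r)/r^2) atTop (nhds 0) :=
    hV.tendsto_div_nhds_zero
  have hrecip : Tendsto (fun r => 1/(Real.pi * q r)) atTop (nhds (1/Real.pi)) := by
    have h : Tendsto (fun r => 1/(Real.pi * q r)) atTop (nhds (1/(Real.pi*1))) :=
      Tendsto.div tendsto_const_nhds (tendsto_const_nhds.mul hq1) (by simpa using hπ.ne')
    simpa using h
  have h3lim : Tendsto (fun r => ((V r - W r)/r^2) * (1/(Real.pi * q r)))
      atTop (nhds 0) := by
    have := hdiv.mul hrecip
    simpa using this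
  -- sum of pieces
  have hsum : Tendsto (fun r => r * (1 - 1/(3*(Real.sqrt (q r))^2)
      - (2/3)*Real.sqrt (q r)) + m / q r
      + ((V r - W r)/r^2) * (1/(Real.pi * q r))) atTop (nhds m) := by
    have := (h1lim.add h2lim).add h3lim
    simpa using this
  refine hsum.congr' ?_
  filter_upwards [eventually_ge_atTop (1:ℝ), hqhalf] with r hr hq
  have hrpos : (0:ℝ) < r := by linarith
  have hqpos : (0:ℝ) < q r := by linarith
  have hqr : q r = A r / (2 * Real.pi * r ^ 2) := rfl
  have hApos : (0:ℝ) < A r := by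
    have : A r = 2*Real.pi*r^2 * q r := by rw [hqr]; field_simp
    rw [this]; positivity
  set s := Real.sqrt (q r) with hs_def
  have hs2 : s^2 = q r := Real.sq_sqrt hqpos.le
  have hspos : (0:ℝ) < s := Real.sqrt_pos.mpr hqpos
  have hAeq : A r = 2*Real.pi*r^2*s^2 := by rw [hs2, hqr]; field_simp
  have e2 : (Real.sqrt 2)^2 = 2 := Real.sq_sqrt (by norm_num)
  have eπ : (Real.sqrt Real.pi)^2 = Real.pi := Real.sq_sqrt hπ.le
  have hsqrtπpos : (0:ℝ) < Real.sqrt Real.pi := Real.sqrt_pos.mpr hπ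
  have hsq : (Real.sqrt 2 * Real.sqrt Real.pi * r * s)^2 = 2*Real.pi*r^2*s^2 := by
    rw [mul_pow, mul_pow, mul_pow, e2, eπ]
  have hsqrtA : Real.sqrt (A r) = Real.sqrt 2 * Real.sqrt Real.pi * r * s := by
    rw [show A r = (Real.sqrt 2 * Real.sqrt Real.pi * r * s)^2 by rw [hAeq, hsq]]
    exact Real.sqrt_sq (by positivity)
  have hrpow : (A r) ^ ((3:ℝ)/2) = A r * Real.sqrt (A r) := by
    rw [show (3:ℝ)/2 = 1 + 1/2 by norm_num, Real.rpow_add hApos, Real.rpow_one,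
      Real.sqrt_eq_rpow]
  rw [hrpow, hsqrtA, ← hs2]
  simp only [hW_def]
  rw [hAeq]
  have hπne : Real.pi ≠ 0 := hπ.ne'
  have hrne : r ≠ 0 := hrpos.ne'
  have hsne : s ≠ 0 := hspos.ne'
  have hsπne : Real.sqrt Real.pi ≠ 0 := hsqrtπpos.ne'
  field_simp
  ring_nf
  rw [e2]
  ring
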